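/- Let u : ℝ³ → ℝ be continuously differentiable with compact support. Then (2/3)∫_{ℝ³} u³ ≤ (1/2)‖∇u‖_{L²(ℝ³)}² + (2¹¹/3)‖u‖_{L²(ℝ³)}⁶. -/

import Mathlib

open MeasureTheory ENNReal

/-- Inequality (2.11) of the paper: for `u` continuously differentiable with
compact support on ℝ³, `(2/3) ∫ u³ ≤ (1/2) ‖∇u‖² + (2¹¹/3) ‖u‖⁶`. -/
theorem cube_integral_bound
    (u : EuclideanSpace ℝ (Fin 3) → ℝ) (hu : ContDiff ℝ 1 u)
    (hsupp : HasCompactSupport u) :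
    (2 / 3) * ∫ x, (u x) ^ 3 ≤
      (1 / 2) * (∫ x, ‖gradient u x‖ ^ 2) +
        (2 ^ 11 / 3) * (∫ x, (u x) ^ 2) ^ 3 := by
  classical
  -- identification of ℝ³ with EuclideanSpace
  set Leq : (Fin 3 → ℝ) ≃L[ℝ] EuclideanSpace ℝ (Fin 3) :=
    (PiLp.continuousLinearEquiv 2 ℝ (fun _ : Fin 3 => ℝ)).symm with hLeq
  set L : (Fin 3 → ℝ) →L[ℝ] EuclideanSpace ℝ (Fin 3) := Leq.toContinuousLinearMap with hL
  have hLnorm : ‖L‖ ≤ Real.sqrt 3 := by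
    refine ContinuousLinearMap.opNorm_le_bound _ (Real.sqrt_nonneg 3) fun y => ?_
    have h1 : ‖L y‖ = Real.sqrt (∑ i : Fin 3, ‖y i‖ ^ 2) := EuclideanSpace.norm_eq _
    rw [h1]
    have h2 : (∑ i : Fin 3, ‖y i‖ ^ 2) ≤ 3 * ‖y‖ ^ 2 := by
      have : ∀ i : Fin 3, ‖y i‖ ^ 2 ≤ ‖y‖ ^ 2 := fun i =>
        pow_le_pow_left₀ (norm_nonneg _) (norm_le_pi_norm y i) 2
      calc (∑ i : Fin 3, ‖y i‖ ^ 2) ≤ ∑ _i : Fin 3, ‖y‖ ^ 2 :=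
            Finset.sum_le_sum fun i _ => this i
        _ = 3 * ‖y‖ ^ 2 := by simp
    calc Real.sqrt (∑ i : Fin 3, ‖y i‖ ^ 2) ≤ Real.sqrt (3 * ‖y‖ ^ 2) :=
          Real.sqrt_le_sqrt h2
      _ = Real.sqrt 3 * ‖y‖ := by
          rw [Real.sqrt_mul (by norm_num), Real.sqrt_sq (norm_nonneg _)]
  -- transferred function
  set w : (Fin 3 → ℝ) → ℝ := fun y => u (L y) with hwdef
  have hw : ContDiff ℝ 1 w := hu.comp Leq.contDiff
  have hwsupp : HasCompactSupport w := hsupp.comp_homeomorph Leq.toHomeomorph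
  have hwcont : Continuous w := hw.continuous
  set v : (Fin 3 → ℝ) → ℝ := fun y => w y * w y with hvdef
  have hv : ContDiff ℝ 1 v := hw.mul hw
  have hvsupp : HasCompactSupport v := hwsupp.mul_right
  have hucont : Continuous u := hu.continuous
  have hfdcont : Continuous (fderiv ℝ u) := hu.continuous_fderiv one_ne_zero
  -- derivative bound for v
  have hDv : ∀ y, (‖fderiv ℝ v y‖₊ : ℝ≥0∞) ≤
      ENNReal.ofReal (2 * Real.sqrt 3) * ((‖w y‖₊ : ℝ≥0∞) * (‖fderiv ℝ u (L y)‖₊ : ℝ≥0∞)) := by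
    intro y
    have hDu : HasFDerivAt u (fderiv ℝ u (L y)) (L y) :=
      (hu.differentiable one_ne_zero (L y)).hasFDerivAt
    have hDw : HasFDerivAt w ((fderiv ℝ u (L y)).comp L) y := hDu.comp y L.hasFDerivAt
    have hDv' : HasFDerivAt v
        (w y • ((fderiv ℝ u (L y)).comp L) + w y • ((fderiv ℝ u (L y)).comp L)) y :=
      hDw.mul hDw
    have hfd : fderiv ℝ v y = w y • ((fderiv ℝ u (L y)).comp L) +
        w y • ((fderiv ℝ u (L y)).comp L) := hDv'.fderiv
    have hre : ‖fderiv ℝ v y‖ ≤ 2 * Real.sqrt 3 * (‖w y‖ * ‖fderiv ℝ u (L y)‖) := by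
      rw [hfd]
      have h1 : ‖(fderiv ℝ u (L y)).comp L‖ ≤ ‖fderiv ℝ u (L y)‖ * Real.sqrt 3 := by
        calc ‖(fderiv ℝ u (L y)).comp L‖ ≤ ‖fderiv ℝ u (L y)‖ * ‖L‖ :=
              ContinuousLinearMap.opNorm_comp_le _ _
          _ ≤ ‖fderiv ℝ u (L y)‖ * Real.sqrt 3 := by
              exact mul_le_mul_of_nonneg_left hLnorm (norm_nonneg _)
      calc ‖w y • ((fderiv ℝ u (L y)).comp L) + w y • ((fderiv ℝ u (L y)).comp L)‖
          ≤ ‖w y • ((fderiv ℝ u (L y)).comp L)‖ + ‖w y • ((fderiv ℝ u (L y)).comp L)‖ :=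
            norm_add_le _ _
        _ = 2 * (‖w y‖ * ‖(fderiv ℝ u (L y)).comp L‖) := by
            rw [norm_smul (w y) ((fderiv ℝ u (L y)).comp L)]; ring
        _ ≤ 2 * (‖w y‖ * (‖fderiv ℝ u (L y)‖ * Real.sqrt 3)) := by
            have := mul_le_mul_of_nonneg_left h1 (norm_nonneg (w y))
            linarith
        _ = 2 * Real.sqrt 3 * (‖w y‖ * ‖fderiv ℝ u (L y)‖) := by ring
    calc (‖fderiv ℝ v y‖₊ : ℝ≥0∞) = ENNReal.ofReal ‖fderiv ℝ v y‖ :=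
          (ofReal_norm _).symm
      _ ≤ ENNReal.ofReal (2 * Real.sqrt 3 * (‖w y‖ * ‖fderiv ℝ u (L y)‖)) :=
          ENNReal.ofReal_le_ofReal hre
      _ = ENNReal.ofReal (2 * Real.sqrt 3) * ((‖w y‖₊ : ℝ≥0∞) * (‖fderiv ℝ u (L y)‖₊ : ℝ≥0∞)) := by
          rw [ENNReal.ofReal_mul (by positivity), ENNReal.ofReal_mul (norm_nonneg _),
            ofReal_norm, ofReal_norm, enorm_eq_nnnorm, enorm_eq_nnnorm]
  -- conjugate exponents
  have hp32 : ((Fintype.card (Fin 3) : ℝ)).HolderConjugate (3/2) := by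
    have hcard : ((Fintype.card (Fin 3) : ℕ) : ℝ) = 3 := by simp
    rw [hcard]
    exact ⟨by norm_num, by norm_num, by norm_num⟩
  have hp22 : (2:ℝ).HolderConjugate 2 := ⟨by norm_num, by norm_num, by norm_num⟩
  -- measure-preserving transfer
  have mp : MeasurePreserving (⇑(MeasurableEquiv.toLp 2 (Fin 3 → ℝ)))
      (volume : Measure (Fin 3 → ℝ)) volume :=
    (EuclideanSpace.volume_preserving_symm_measurableEquiv_toLp (Fin 3)).symm
  have transfer : ∀ g : EuclideanSpace ℝ (Fin 3) → ℝ≥0∞, Measurable g →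
      ∫⁻ y, g (L y) = ∫⁻ x, g x := fun g hg => mp.lintegral_comp hg
  -- the three main quantities
  set J : ℝ≥0∞ := ∫⁻ x, (‖u x‖₊ : ℝ≥0∞) ^ (3:ℝ) with hJdef
  set Y' : ℝ≥0∞ := ∫⁻ x, (‖u x‖₊ : ℝ≥0∞) ^ (2:ℝ) with hY'def
  set X' : ℝ≥0∞ := ∫⁻ x, (‖fderiv ℝ u x‖₊ : ℝ≥0∞) ^ (2:ℝ) with hX'def
  set c : ℝ≥0∞ := ENNReal.ofReal (2 * Real.sqrt 3) with hcdef
  have measw : Measurable fun y => (‖w y‖₊ : ℝ≥0∞) :=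
    hwcont.measurable.nnnorm.coe_nnreal_ennreal
  have measdu : Measurable fun y => (‖fderiv ℝ u (L y)‖₊ : ℝ≥0∞) :=
    ((hfdcont.comp L.continuous).measurable.nnnorm).coe_nnreal_ennreal
  have measu2 : Measurable fun x : EuclideanSpace ℝ (Fin 3) => (‖u x‖₊ : ℝ≥0∞) ^ (2:ℝ) :=
    (hucont.measurable.nnnorm.coe_nnreal_ennreal).pow_const _
  have measu3 : Measurable fun x : EuclideanSpace ℝ (Fin 3) => (‖u x‖₊ : ℝ≥0∞) ^ (3:ℝ) :=
    (hucont.measurable.nnnorm.coe_nnreal_ennreal).pow_const _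
  have measdu2 : Measurable fun x : EuclideanSpace ℝ (Fin 3) =>
      (‖fderiv ℝ u x‖₊ : ℝ≥0∞) ^ (2:ℝ) :=
    (hfdcont.measurable.nnnorm.coe_nnreal_ennreal).pow_const _
  -- step 1: bound the integral of ‖Dv‖ by Cauchy-Schwarz
  have hCS : (∫⁻ y, (‖w y‖₊ : ℝ≥0∞) * (‖fderiv ℝ u (L y)‖₊ : ℝ≥0∞)) ≤
      (∫⁻ y, (‖w y‖₊ : ℝ≥0∞) ^ (2:ℝ)) ^ (1/2:ℝ) *
        (∫⁻ y, (‖fderiv ℝ u (L y)‖₊ : ℝ≥0∞) ^ (2:ℝ)) ^ (1/2:ℝ) := by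
    have := ENNReal.lintegral_mul_le_Lp_mul_Lq volume hp22
      measw.aemeasurable measdu.aemeasurable
    simpa using this
  have tY : (∫⁻ y, (‖w y‖₊ : ℝ≥0∞) ^ (2:ℝ)) = Y' :=
    transfer (fun x => (‖u x‖₊ : ℝ≥0∞) ^ (2:ℝ)) measu2
  have tX : (∫⁻ y, (‖fderiv ℝ u (L y)‖₊ : ℝ≥0∞) ^ (2:ℝ)) = X' :=
    transfer (fun x => (‖fderiv ℝ u x‖₊ : ℝ≥0∞) ^ (2:ℝ)) measdu2
  have hA : (∫⁻ y, (‖fderiv ℝ v y‖₊ : ℝ≥0∞)) ≤ c * (Y' ^ (1/2:ℝ) * X' ^ (1/2:ℝ)) := by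
    calc (∫⁻ y, (‖fderiv ℝ v y‖₊ : ℝ≥0∞))
        ≤ ∫⁻ y, c * ((‖w y‖₊ : ℝ≥0∞) * (‖fderiv ℝ u (L y)‖₊ : ℝ≥0∞)) := lintegral_mono hDv
      _ = c * ∫⁻ y, (‖w y‖₊ : ℝ≥0∞) * (‖fderiv ℝ u (L y)‖₊ : ℝ≥0∞) :=
          lintegral_const_mul' _ _ ENNReal.ofReal_ne_top
      _ ≤ c * (Y' ^ (1/2:ℝ) * X' ^ (1/2:ℝ)) := by
          rw [← tY, ← tX]; exact mul_le_mul_right hCS c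
  -- step 2: GNS inequality applied to v = w²
  have hmain : J ≤ (c * (Y' ^ (1/2:ℝ) * X' ^ (1/2:ℝ))) ^ (3/2:ℝ) := by
    have h1 : J = ∫⁻ y, (‖v y‖₊ : ℝ≥0∞) ^ (3/2:ℝ) := by
      rw [hJdef, ← transfer (fun x => (‖u x‖₊ : ℝ≥0∞) ^ (3:ℝ)) measu3]
      refine lintegral_congr fun y => ?_
      have hvy : (‖v y‖₊ : ℝ≥0∞) = (‖w y‖₊ : ℝ≥0∞) * (‖w y‖₊ : ℝ≥0∞) := by
        simp [hvdef, nnnorm_mul]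
      rw [hvy, ← sq, ← ENNReal.rpow_natCast _ 2, ← ENNReal.rpow_mul]
      norm_num; rfl
    rw [h1]
    calc (∫⁻ y, (‖v y‖₊ : ℝ≥0∞) ^ (3/2:ℝ))
        ≤ (∫⁻ y, (‖fderiv ℝ v y‖₊ : ℝ≥0∞)) ^ (3/2:ℝ) :=
          MeasureTheory.lintegral_pow_le_pow_lintegral_fderiv_aux hp32 hv hvsupp
      _ ≤ (c * (Y' ^ (1/2:ℝ) * X' ^ (1/2:ℝ))) ^ (3/2:ℝ) :=
          ENNReal.rpow_le_rpow hA (by norm_num)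
  -- step 3: fourth power
  have hfinal : J ^ (4:ℝ) ≤ c ^ (6:ℝ) * (Y' ^ (3:ℝ) * X' ^ (3:ℝ)) := by
    have e1 : ((c * (Y' ^ (1/2:ℝ) * X' ^ (1/2:ℝ))) ^ (3/2:ℝ)) ^ (4:ℝ)
        = (c * (Y' ^ (1/2:ℝ) * X' ^ (1/2:ℝ))) ^ (6:ℝ) := by
      rw [← ENNReal.rpow_mul]; norm_num
    have e2 : (c * (Y' ^ (1/2:ℝ) * X' ^ (1/2:ℝ))) ^ (6:ℝ)
        = c ^ (6:ℝ) * ((Y' ^ (1/2:ℝ)) ^ (6:ℝ) * (X' ^ (1/2:ℝ)) ^ (6:ℝ)) := by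
      rw [ENNReal.mul_rpow_of_nonneg _ _ (by norm_num : (0:ℝ) ≤ 6),
        ENNReal.mul_rpow_of_nonneg _ _ (by norm_num : (0:ℝ) ≤ 6)]
    have e3 : (Y' ^ (1/2:ℝ)) ^ (6:ℝ) = Y' ^ (3:ℝ) := by
      rw [← ENNReal.rpow_mul]; norm_num
    have e4 : (X' ^ (1/2:ℝ)) ^ (6:ℝ) = X' ^ (3:ℝ) := by
      rw [← ENNReal.rpow_mul]; norm_num
    calc J ^ (4:ℝ) ≤ ((c * (Y' ^ (1/2:ℝ) * X' ^ (1/2:ℝ))) ^ (3/2:ℝ)) ^ (4:ℝ) :=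
          ENNReal.rpow_le_rpow hmain (by norm_num)
      _ = c ^ (6:ℝ) * (Y' ^ (3:ℝ) * X' ^ (3:ℝ)) := by rw [e1, e2, e3, e4]
  -- real-valued quantities
  set I3 : ℝ := ∫ x, |u x| ^ 3 with hI3def
  set Y : ℝ := ∫ x, (u x) ^ 2 with hYdef
  set X : ℝ := ∫ x, ‖fderiv ℝ u x‖ ^ 2 with hXdef
  -- integrability
  have hi3 : Integrable (fun x => |u x| ^ 3) (volume : Measure (EuclideanSpace ℝ (Fin 3))) := by
    refine Continuous.integrable_of_hasCompactSupport (by fun_prop) ?_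
    exact hsupp.comp_left (g := fun t : ℝ => |t| ^ 3) (by simp)
  have hiu3 : Integrable (fun x => (u x) ^ 3)
      (volume : Measure (EuclideanSpace ℝ (Fin 3))) := by
    refine Continuous.integrable_of_hasCompactSupport (by fun_prop) ?_
    exact hsupp.comp_left (g := fun t : ℝ => t ^ 3) (by simp)
  have hiu2 : Integrable (fun x => (u x) ^ 2)
      (volume : Measure (EuclideanSpace ℝ (Fin 3))) := by
    refine Continuous.integrable_of_hasCompactSupport (by fun_prop) ?_
    exact hsupp.comp_left (g := fun t : ℝ => t ^ 2) (by simp)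
  have hidu2 : Integrable (fun x => ‖fderiv ℝ u x‖ ^ 2)
      (volume : Measure (EuclideanSpace ℝ (Fin 3))) := by
    refine Continuous.integrable_of_hasCompactSupport (by fun_prop) ?_
    exact (hsupp.fderiv ℝ).comp_left
      (g := fun A : EuclideanSpace ℝ (Fin 3) →L[ℝ] ℝ => ‖A‖ ^ 2) (by simp)
  -- nonnegativity
  have hI30 : 0 ≤ I3 := integral_nonneg fun x => by positivity
  have hY0 : 0 ≤ Y := integral_nonneg fun x => by positivity
  have hX0 : 0 ≤ X := integral_nonneg fun x => by positivity
  -- helper: ofReal and rpow with numeral exponents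
  have pow2 : ∀ r : ℝ, 0 ≤ r → ENNReal.ofReal r ^ (2:ℝ) = ENNReal.ofReal (r ^ 2) := by
    intro r hr
    rw [show (2:ℝ) = ((2:ℕ):ℝ) by norm_num, ENNReal.rpow_natCast,
      ← ENNReal.ofReal_pow hr]
  have pow3 : ∀ r : ℝ, 0 ≤ r → ENNReal.ofReal r ^ (3:ℝ) = ENNReal.ofReal (r ^ 3) := by
    intro r hr
    rw [show (3:ℝ) = ((3:ℕ):ℝ) by norm_num, ENNReal.rpow_natCast,
      ← ENNReal.ofReal_pow hr]
  have pow4 : ∀ r : ℝ, 0 ≤ r → ENNReal.ofReal r ^ (4:ℝ) = ENNReal.ofReal (r ^ 4) := by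
    intro r hr
    rw [show (4:ℝ) = ((4:ℕ):ℝ) by norm_num, ENNReal.rpow_natCast,
      ← ENNReal.ofReal_pow hr]
  -- identify the lintegrals with the real integrals
  have hJr : J = ENNReal.ofReal I3 := by
    rw [hI3def, ofReal_integral_eq_lintegral_ofReal hi3
      (Filter.Eventually.of_forall fun x => by positivity)]
    refine lintegral_congr fun x => ?_
    rw [← enorm_eq_nnnorm, ← ofReal_norm, Real.norm_eq_abs, pow3 _ (abs_nonneg _)]
  have hYr : Y' = ENNReal.ofReal Y := by
    rw [hYdef, ofReal_integral_eq_lintegral_ofReal hiu2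
      (Filter.Eventually.of_forall fun x => by positivity)]
    refine lintegral_congr fun x => ?_
    rw [← enorm_eq_nnnorm, ← ofReal_norm, Real.norm_eq_abs, pow2 _ (abs_nonneg _), sq_abs]
  have hXr : X' = ENNReal.ofReal X := by
    rw [hXdef, ofReal_integral_eq_lintegral_ofReal hidu2
      (Filter.Eventually.of_forall fun x => by positivity)]
    refine lintegral_congr fun x => ?_
    rw [← enorm_eq_nnnorm, ← ofReal_norm, pow2 _ (norm_nonneg _)]
  have hc6 : c ^ (6:ℝ) = ENNReal.ofReal 1728 := by
    have h1 : c ^ (6:ℝ) = c ^ (6:ℕ) := by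
      rw [← ENNReal.rpow_natCast c 6]; norm_num
    have h2 : (2 * Real.sqrt 3) ^ 6 = 1728 := by
      have h3 : Real.sqrt 3 ^ 2 = 3 := Real.sq_sqrt (by norm_num)
      calc (2 * Real.sqrt 3) ^ 6 = 64 * (Real.sqrt 3 ^ 2) ^ 3 := by ring
        _ = 1728 := by rw [h3]; norm_num
    rw [h1, hcdef, ← ENNReal.ofReal_pow (by positivity), h2]
  -- the real inequality I3⁴ ≤ 1728·Y³·X³
  have hreal : I3 ^ 4 ≤ 1728 * (Y ^ 3 * X ^ 3) := by
    have h1 : ENNReal.ofReal (I3 ^ 4) ≤ ENNReal.ofReal (1728 * (Y ^ 3 * X ^ 3)) := by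
      have lhs : ENNReal.ofReal (I3 ^ 4) = J ^ (4:ℝ) := by
        rw [hJr, pow4 _ hI30]
      have rhs : c ^ (6:ℝ) * (Y' ^ (3:ℝ) * X' ^ (3:ℝ))
          = ENNReal.ofReal (1728 * (Y ^ 3 * X ^ 3)) := by
        rw [hc6, hYr, hXr, pow3 _ hY0, pow3 _ hX0,
          ← ENNReal.ofReal_mul (by positivity : (0:ℝ) ≤ Y ^ 3),
          ← ENNReal.ofReal_mul (by norm_num : (0:ℝ) ≤ 1728)]
      rw [lhs, ← rhs]; exact hfinal
    exact (ENNReal.ofReal_le_ofReal_iff (by positivity)).mp h1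
  -- AM-GM endgame
  have key : I3 ≤ 3/4 * X + 1024 * Y ^ 3 := by
    refine le_of_pow_le_pow_left₀ (n := 4) (by norm_num) (by positivity) ?_
    have expand : (3/4 * X + 1024 * Y ^ 3) ^ 4
        = 4 * (3/4 * X) ^ 3 * (1024 * Y ^ 3)
          + ((3/4 * X) ^ 4 + 6 * (3/4 * X) ^ 2 * (1024 * Y ^ 3) ^ 2
            + 4 * (3/4 * X) * (1024 * Y ^ 3) ^ 3 + (1024 * Y ^ 3) ^ 4) := by ring
    have hpos : 0 ≤ (3/4 * X) ^ 4 + 6 * (3/4 * X) ^ 2 * (1024 * Y ^ 3) ^ 2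
        + 4 * (3/4 * X) * (1024 * Y ^ 3) ^ 3 + (1024 * Y ^ 3) ^ 4 := by positivity
    have heq : 1728 * (Y ^ 3 * X ^ 3) = 4 * (3/4 * X) ^ 3 * (1024 * Y ^ 3) := by ring
    linarith [hreal]
  -- monotonicity of the cubic integral
  have hI3mono : (∫ x, (u x) ^ 3) ≤ I3 := by
    rw [hI3def]
    refine integral_mono hiu3 hi3 fun x => ?_
    calc (u x) ^ 3 ≤ |(u x) ^ 3| := le_abs_self _
      _ = |u x| ^ 3 := abs_pow _ _
  -- rewrite the gradient norm
  have hgradint : (∫ x, ‖gradient u x‖ ^ 2) = X := by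
    rw [hXdef]
    refine integral_congr_ae (Filter.Eventually.of_forall fun x => ?_)
    simp only [gradient, LinearIsometryEquiv.norm_map]
  rw [hgradint]
  have h2048 : (2:ℝ) ^ 11 / 3 = 2048 / 3 := by norm_num
  rw [h2048]
  linarith [key, hI3mono]
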